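/- Fix a>0 and λ∈(0,1). There exists a constant C>0, depending only on a, λ and the doubling constant c_d, such that for all h,k∈ℕ with the closure of B̂((x₀,t₀), 2(λ^{2k}(1+h²log²(1/λ)))^{1/4}) contained in S, the compact set F_k^h = {(ξ,τ)∈S∖Ω : λ^{k+1} ≤ t₀−τ ≤ λ^k, exp(d(x₀,ξ)²/(t₀−τ)) ≤ (1/λ)^h} satisfies C_a(F_k^h) ≤ C · h^{Q/2} · |B(x₀, λ^{k/2})|. -/

import Mathlib

open MeasureTheory Set
open scoped ENNReal NNReal

noncomputable section

/-- ℝ^N with Euclidean structure and Lebesgue measure. -/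
abbrev Vec (N : ℕ) := EuclideanSpace ℝ (Fin N)

/-- The `d`-ball `B(x,r) = {y : d(x,y) < r}`. -/
def dBall {N : ℕ} (d : Vec N → Vec N → ℝ) (x : Vec N) (r : ℝ) : Set (Vec N) :=
  {y | d x y < r}

/-- Lebesgue measure is doubling with respect to `d`, with doubling constant `cd`. -/
def Doubling {N : ℕ} (d : Vec N → Vec N → ℝ) (cd : ℝ) : Prop :=
  ∀ (x : Vec N) (r : ℝ), 0 < r →
    volume (dBall d x (2 * r)) ≤ ENNReal.ofReal cd * volume (dBall d x r)

/-- `d` is a metric on ℝ^N inducing the Euclidean topology (with bounded `d`-balls,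
as in assumption (D1) of the paper). -/
structure GoodMetric {N : ℕ} (d : Vec N → Vec N → ℝ) : Prop where
  nonneg : ∀ x y, 0 ≤ d x y
  eq_zero_iff : ∀ x y, d x y = 0 ↔ x = y
  symm : ∀ x y, d x y = d y x
  triangle : ∀ x y z, d x z ≤ d x y + d y z
  cont : Continuous fun p : Vec N × Vec N => d p.1 p.2
  finer : ∀ (x : Vec N) (ε : ℝ), 0 < ε → ∃ δ > 0, ∀ y, d x y < δ → dist x y < ε
  bounded : ∀ (x : Vec N) (r : ℝ), Bornology.IsBounded (dBall d x r)

/-- The strip `S = ℝ^N × (T₁,T₂)`. -/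
def strip (N : ℕ) (T₁ T₂ : EReal) : Set (Vec N × ℝ) :=
  {z | T₁ < (z.2 : EReal) ∧ (z.2 : EReal) < T₂}

/-- The `d`-Gaussian kernel of exponent `a`. -/
def gaussK {N : ℕ} (d : Vec N → Vec N → ℝ) (a : ℝ) (z ζ : Vec N × ℝ) : ℝ≥0∞ :=
  if ζ.2 < z.2 then
    (volume (dBall d z.1 (Real.sqrt (z.2 - ζ.2))))⁻¹ *
      ENNReal.ofReal (Real.exp (-a * d z.1 ζ.1 ^ 2 / (z.2 - ζ.2)))
  else 0

/-- Capacity of `F` with respect to the kernel `K`: supremum of total masses of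
nonnegative Radon measures supported in `F` whose `K`-potential is `≤ 1` on `X`. -/
def capac {α : Type*} [TopologicalSpace α] [MeasurableSpace α]
    (X : Set α) (K : α → α → ℝ≥0∞) (F : Set α) : ℝ≥0∞ :=
  ⨆ (μ : Measure α) (_ : μ.InnerRegular ∧ IsLocallyFiniteMeasure μ ∧ μ Fᶜ = 0 ∧
      ∀ z ∈ X, ∫⁻ ζ, K z ζ ∂μ ≤ 1), μ F

/-- The parabolic counterpart `d̂` of `d`. -/
def pdist {N : ℕ} (d : Vec N → Vec N → ℝ) (z ζ : Vec N × ℝ) : ℝ :=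
  (d z.1 ζ.1 ^ 4 + (z.2 - ζ.2) ^ 2) ^ (1 / 4 : ℝ)

/-- The parabolic ball `B̂(z,r)` (as a subset of ℝ^{N+1}). -/
def pBall {N : ℕ} (d : Vec N → Vec N → ℝ) (z : Vec N × ℝ) (r : ℝ) : Set (Vec N × ℝ) :=
  {ζ | pdist d z ζ < r}

/-- The ring-shaped set `Ω_k^h(z₀,λ)`. -/
def ringSet {N : ℕ} (d : Vec N → Vec N → ℝ) (S Ω : Set (Vec N × ℝ)) (z₀ : Vec N × ℝ)
    (lam : ℝ) (k h : ℤ) : Set (Vec N × ℝ) :=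
  {ζ ∈ S \ Ω | lam ^ (k + 1) ≤ z₀.2 - ζ.2 ∧ z₀.2 - ζ.2 ≤ lam ^ k ∧
    (1 / lam) ^ (h - 1) ≤ Real.exp (d z₀.1 ζ.1 ^ 2 / (z₀.2 - ζ.2)) ∧
    Real.exp (d z₀.1 ζ.1 ^ 2 / (z₀.2 - ζ.2)) ≤ (1 / lam) ^ h ∧
    pdist d z₀ ζ ≤ Real.sqrt lam}

/-- The set `D_k^h(z₀,λ)`. -/
def DSet {N : ℕ} (d : Vec N → Vec N → ℝ) (S Ω : Set (Vec N × ℝ)) (z₀ : Vec N × ℝ)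
    (lam : ℝ) (k h : ℤ) : Set (Vec N × ℝ) :=
  {ζ ∈ S \ Ω | lam ^ (k + 1) ≤ z₀.2 - ζ.2 ∧ z₀.2 - ζ.2 ≤ lam ^ k ∧
    Real.exp (d z₀.1 ζ.1 ^ 2 / (z₀.2 - ζ.2)) ≤ (1 / lam) ^ h ∧
    pdist d z₀ ζ ≤ Real.sqrt lam}

/-- The Wiener-type series `z_a^b(λ;s)`. -/
def zSeries {N : ℕ} (d : Vec N → Vec N → ℝ) (S Ω : Set (Vec N × ℝ)) (z₀ : Vec N × ℝ)
    (a b lam s : ℝ) : ℝ≥0∞ :=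
  ∑' k : ℕ, ∑' h : ℕ,
    if 1 ≤ k ∧ (k : ℝ) ≤ s ∧ 1 ≤ h then
      ENNReal.ofReal (lam ^ (b * (h : ℝ))) *
        capac S (gaussK d a) (DSet d S Ω z₀ lam (k : ℤ) (h : ℤ)) /
        volume (dBall d z₀.1 (lam ^ ((k : ℝ) / 2)))
    else 0

/-- The section `E_λ(ρ,τ)`. -/
def Eset {N : ℕ} (d : Vec N → Vec N → ℝ) (S Ω : Set (Vec N × ℝ)) (z₀ : Vec N × ℝ)
    (lam ρ τ : ℝ) : Set (Vec N) :=
  {x | (x, τ) ∈ S \ Ω ∧ pdist d z₀ (x, τ) ≤ Real.sqrt lam ∧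
    Real.exp (d z₀.1 x ^ 2 / (z₀.2 - τ)) ≤ ρ}


private lemma rpow_logb_swap {b x : ℝ} (hb : 0 < b) (hx : 0 < x) :
    b ^ Real.logb 2 x = x ^ Real.logb 2 b := by
  rw [Real.rpow_def_of_pos hb, Real.rpow_def_of_pos hx, Real.logb, Real.logb]
  congr 1
  ring

private lemma doubling_iter {N : ℕ} {d : Vec N → Vec N → ℝ} {cd : ℝ}
    (hdb : Doubling d cd) (x : Vec N) {r : ℝ} (hr : 0 < r) (m : ℕ) :
    volume (dBall d x (2 ^ m * r)) ≤ ENNReal.ofReal cd ^ m * volume (dBall d x r) := by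
  induction m with
  | zero => simp
  | succ m ih =>
      have h2 : (2 : ℝ) ^ (m + 1) * r = 2 * (2 ^ m * r) := by ring
      rw [h2]
      calc volume (dBall d x (2 * (2 ^ m * r)))
          ≤ ENNReal.ofReal cd * volume (dBall d x (2 ^ m * r)) := hdb x _ (by positivity)
        _ ≤ ENNReal.ofReal cd * (ENNReal.ofReal cd ^ m * volume (dBall d x r)) :=
            mul_le_mul_right ih _
        _ = ENNReal.ofReal cd ^ (m + 1) * volume (dBall d x r) := by
            rw [pow_succ]; ring


set_option maxHeartbeats 1000000 in
/-- Capacity bound (4.6) in the paper: `C_a(F_k^h) ≤ C h^{Q/2} |B(x₀,λ^{k/2})|`. -/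
theorem stmt9 (a lam cd : ℝ) (ha : 0 < a) (hlam : lam ∈ Set.Ioo 0 1) (hcd : 1 < cd) :
    ∃ C : ℝ, 0 < C ∧
      ∀ (N : ℕ), 1 ≤ N → ∀ d : Vec N → Vec N → ℝ, GoodMetric d → Doubling d cd →
      ∀ T₁ T₂ : EReal, T₁ < T₂ →
      ∀ Ω : Set (Vec N × ℝ), IsOpen Ω → Bornology.IsBounded Ω →
        closure Ω ⊆ strip N T₁ T₂ →
      ∀ z₀ : Vec N × ℝ, z₀ ∈ frontier Ω →
      ∀ h k : ℕ, 1 ≤ h → 1 ≤ k →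
      closure (pBall d z₀
          (2 * (lam ^ (2 * (k : ℝ)) *
            (1 + (h : ℝ) ^ 2 * Real.log (1 / lam) ^ 2)) ^ (1 / 4 : ℝ))) ⊆
        strip N T₁ T₂ →
      capac (strip N T₁ T₂) (gaussK d a)
          {ζ ∈ strip N T₁ T₂ \ Ω |
            lam ^ ((k : ℤ) + 1) ≤ z₀.2 - ζ.2 ∧ z₀.2 - ζ.2 ≤ lam ^ (k : ℤ) ∧
            Real.exp (d z₀.1 ζ.1 ^ 2 / (z₀.2 - ζ.2)) ≤ (1 / lam) ^ (h : ℤ)} ≤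
        ENNReal.ofReal (C * (h : ℝ) ^ (Real.logb 2 cd / 2)) *
          volume (dBall d z₀.1 (lam ^ ((k : ℝ) / 2))) := by
  obtain ⟨hlam0, hlam1⟩ := hlam
  have hcd0 : (0 : ℝ) < cd := by linarith
  set L : ℝ := Real.log (1 / lam) with hLdef
  have hLpos : 0 < L := Real.log_pos (by rw [lt_div_iff₀ hlam0]; linarith)
  set Q : ℝ := Real.logb 2 cd with hQdef
  have hQpos : 0 < Q := Real.logb_pos one_lt_two hcd
  refine ⟨Real.exp a * cd * (1 + L) ^ (Q / 2), by positivity, ?_⟩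
  intro N hN d hd hdb T₁ T₂ hT Ω hΩo hΩb hΩS z₀ hz₀ h k hh hk hball
  set C : ℝ := Real.exp a * cd * (1 + L) ^ (Q / 2) with hCdef
  set F : Set (Vec N × ℝ) :=
    {ζ ∈ strip N T₁ T₂ \ Ω |
      lam ^ ((k : ℤ) + 1) ≤ z₀.2 - ζ.2 ∧ z₀.2 - ζ.2 ≤ lam ^ (k : ℤ) ∧
      Real.exp (d z₀.1 ζ.1 ^ 2 / (z₀.2 - ζ.2)) ≤ (1 / lam) ^ (h : ℤ)} with hFdef
  set V : ℝ≥0∞ := volume (dBall d z₀.1 (lam ^ ((k : ℝ) / 2))) with hVdef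
  set M : ℝ≥0∞ := ENNReal.ofReal (C * (h : ℝ) ^ (Q / 2)) with hMdef
  have hh1 : (1 : ℝ) ≤ (h : ℝ) := by exact_mod_cast hh
  have hlamk : (0 : ℝ) < lam ^ k := pow_pos hlam0 k
  -- the test point
  set s : ℝ := (h : ℝ) * lam ^ k * L with hsdef
  have hs : 0 < s := by positivity
  set z : Vec N × ℝ := (z₀.1, z₀.2 + s) with hzdef
  -- z is in the strip
  have hz : z ∈ strip N T₁ T₂ := by
    apply hball
    apply subset_closure
    show pdist d z₀ z < _
    have hdz : d z₀.1 z.1 = 0 := (hd.eq_zero_iff _ _).2 rfl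
    have hpd : pdist d z₀ z = (s ^ 2) ^ (1 / 4 : ℝ) := by
      simp only [pdist, hzdef, hdz, (hd.eq_zero_iff z₀.1 z₀.1).2 rfl]
      norm_num
    have h2k : lam ^ (2 * (k : ℝ)) = (lam ^ k) ^ 2 := by
      rw [show (2 * (k : ℝ)) = ((k * 2 : ℕ) : ℝ) by push_cast; ring,
        Real.rpow_natCast, pow_mul]
    have harg : s ^ 2 ≤ lam ^ (2 * (k : ℝ)) * (1 + (h : ℝ) ^ 2 * L ^ 2) := by
      rw [h2k, hsdef]
      nlinarith [sq_nonneg (lam ^ k), sq_nonneg ((h : ℝ) * L)]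
    have hargpos : 0 < lam ^ (2 * (k : ℝ)) * (1 + (h : ℝ) ^ 2 * L ^ 2) := by
      have := Real.rpow_pos_of_pos hlam0 (2 * (k : ℝ)); positivity
    have h14 : (0 : ℝ) < (lam ^ (2 * (k : ℝ)) * (1 + (h : ℝ) ^ 2 * L ^ 2)) ^ (1 / 4 : ℝ) :=
      Real.rpow_pos_of_pos hargpos _
    calc pdist d z₀ z = (s ^ 2) ^ (1 / 4 : ℝ) := hpd
      _ ≤ (lam ^ (2 * (k : ℝ)) * (1 + (h : ℝ) ^ 2 * L ^ 2)) ^ (1 / 4 : ℝ) :=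
          Real.rpow_le_rpow (sq_nonneg s) harg (by norm_num)
      _ < 2 * (lam ^ (2 * (k : ℝ)) * (1 + (h : ℝ) ^ 2 * L ^ 2)) ^ (1 / 4 : ℝ) := by
          linarith
  -- V is positive and finite
  have hVpos : V ≠ 0 := by
    have hr : (0 : ℝ) < lam ^ ((k : ℝ) / 2) := Real.rpow_pos_of_pos hlam0 _
    have hopen : IsOpen (dBall d z₀.1 (lam ^ ((k : ℝ) / 2))) := by
      have hc : Continuous fun y => d z₀.1 y := hd.cont.comp (Continuous.prodMk_right z₀.1)
      exact isOpen_Iio.preimage hc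
    have hne : (dBall d z₀.1 (lam ^ ((k : ℝ) / 2))).Nonempty :=
      ⟨z₀.1, by simpa [dBall, (hd.eq_zero_iff z₀.1 z₀.1).2 rfl] using hr⟩
    exact (hopen.measure_pos volume hne).ne'
  have hVtop : V ≠ ∞ := (hd.bounded z₀.1 _).measure_lt_top.ne
  -- M is positive and finite
  have hCpos : 0 < C := by positivity
  have hMpos : M ≠ 0 := by
    rw [hMdef]
    exact (ENNReal.ofReal_pos.mpr (by positivity)).ne'
  have hMtop : M ≠ ∞ := ENNReal.ofReal_ne_top
  -- key scalar quantities
  set u : ℝ := (h : ℝ) * (1 + L) with hudef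
  have hu1 : (1 : ℝ) ≤ u := by nlinarith
  have hu0 : (0 : ℝ) < u := by linarith
  have hsq1 : (1 : ℝ) ≤ Real.sqrt u := by
    rw [show (1 : ℝ) = Real.sqrt 1 by simp]
    exact Real.sqrt_le_sqrt hu1
  have hsqpos : (0 : ℝ) < Real.sqrt u := by linarith
  set m : ℕ := ⌈Real.logb 2 (Real.sqrt u)⌉₊ with hmdef
  have hlogbnn : 0 ≤ Real.logb 2 (Real.sqrt u) := Real.logb_nonneg one_lt_two hsq1
  have hsqle : Real.sqrt u ≤ 2 ^ m := by
    calc Real.sqrt u = (2 : ℝ) ^ Real.logb 2 (Real.sqrt u) :=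
          (Real.rpow_logb two_pos (by norm_num) hsqpos).symm
      _ ≤ (2 : ℝ) ^ (m : ℝ) :=
          Real.rpow_le_rpow_of_exponent_le one_le_two (Nat.le_ceil _)
      _ = 2 ^ m := Real.rpow_natCast 2 m
  have hcdm : (cd : ℝ) ^ m ≤ cd * u ^ (Q / 2) := by
    have h1 : (m : ℝ) ≤ Real.logb 2 (Real.sqrt u) + 1 :=
      (Nat.ceil_lt_add_one hlogbnn).le
    have h2 : (cd : ℝ) ^ m = cd ^ (m : ℝ) := (Real.rpow_natCast cd m).symm
    have h3 : cd ^ (m : ℝ) ≤ cd ^ (Real.logb 2 (Real.sqrt u) + 1) :=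
      Real.rpow_le_rpow_of_exponent_le hcd.le h1
    have h4 : cd ^ (Real.logb 2 (Real.sqrt u) + 1) =
        cd ^ Real.logb 2 (Real.sqrt u) * cd := by
      rw [Real.rpow_add hcd0, Real.rpow_one]
    have h5 : cd ^ Real.logb 2 (Real.sqrt u) = u ^ (Q / 2) := by
      rw [rpow_logb_swap hcd0 hsqpos, ← hQdef, Real.sqrt_eq_rpow,
        ← Real.rpow_mul hu0.le]
      congr 1
      ring
    rw [h2]
    calc cd ^ (m : ℝ) ≤ cd ^ (Real.logb 2 (Real.sqrt u) + 1) := h3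
      _ = u ^ (Q / 2) * cd := by rw [h4, h5]
      _ = cd * u ^ (Q / 2) := mul_comm _ _
  -- M factorization
  have hMfact : M = ENNReal.ofReal (Real.exp a) * ENNReal.ofReal (cd * u ^ (Q / 2)) := by
    rw [hMdef, ← ENNReal.ofReal_mul (Real.exp_nonneg a)]
    congr 1
    rw [hCdef, hudef, Real.mul_rpow (by positivity) (by linarith)]
    ring
  -- lower bound on the kernel on F
  have hker : ∀ ζ ∈ F, (M * V)⁻¹ ≤ gaussK d a z ζ := by
    intro ζ hζ
    obtain ⟨-, hlow, hup, hexp⟩ := hζ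
    have hlow' : lam ^ (k + 1) ≤ z₀.2 - ζ.2 := by
      rwa [show ((k : ℤ) + 1) = ((k + 1 : ℕ) : ℤ) by push_cast; ring,
        zpow_natCast] at hlow
    have hup' : z₀.2 - ζ.2 ≤ lam ^ k := by rwa [zpow_natCast] at hup
    have htpos : 0 < z₀.2 - ζ.2 := lt_of_lt_of_le (pow_pos hlam0 (k + 1)) hlow'
    have hζlt : ζ.2 < z.2 := by
      have : z.2 = z₀.2 + s := rfl
      linarith
    have hT : z.2 - ζ.2 = (z₀.2 - ζ.2) + s := by
      have : z.2 = z₀.2 + s := rfl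
      linarith
    have hTpos : 0 < z.2 - ζ.2 := by rw [hT]; linarith
    -- distance bound
    have hdist : d z₀.1 ζ.1 ^ 2 ≤ (h : ℝ) * L * (z₀.2 - ζ.2) := by
      have h1lam : (0 : ℝ) < 1 / lam := by positivity
      have hpow : ((1 : ℝ) / lam) ^ (h : ℤ) = Real.exp ((h : ℝ) * L) := by
        rw [zpow_natCast, Real.exp_nat_mul, Real.exp_log h1lam]
      rw [hpow] at hexp
      have := Real.exp_le_exp.mp hexp
      calc d z₀.1 ζ.1 ^ 2 = d z₀.1 ζ.1 ^ 2 / (z₀.2 - ζ.2) * (z₀.2 - ζ.2) := by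
            field_simp
        _ ≤ (h : ℝ) * L * (z₀.2 - ζ.2) :=
            mul_le_mul_of_nonneg_right this htpos.le
    have hd2T : d z₀.1 ζ.1 ^ 2 ≤ z.2 - ζ.2 := by
      have h1 : (h : ℝ) * L * (z₀.2 - ζ.2) ≤ (h : ℝ) * L * lam ^ k :=
        mul_le_mul_of_nonneg_left hup' (by positivity)
      have h2 : (h : ℝ) * L * lam ^ k = s := by rw [hsdef]; ring
      rw [hT]
      linarith
    -- exponential factor bound
    have hexpfac : Real.exp (-a) ≤ Real.exp (-a * d z₀.1 ζ.1 ^ 2 / (z.2 - ζ.2)) := by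
      apply Real.exp_le_exp.mpr
      rw [le_div_iff₀ hTpos]
      exact mul_le_mul_of_nonpos_left hd2T (by linarith : -a ≤ 0)
    -- volume factor bound
    have hsqrtle : Real.sqrt (z.2 - ζ.2) ≤ 2 ^ m * lam ^ ((k : ℝ) / 2) := by
      have h1 : z.2 - ζ.2 ≤ lam ^ k * u := by
        rw [hT, hudef]
        have h2 : (h : ℝ) * L * lam ^ k = s := by rw [hsdef]; ring
        nlinarith
      have h3 : Real.sqrt (lam ^ k) = lam ^ ((k : ℝ) / 2) := by
        rw [Real.sqrt_eq_rpow, ← Real.rpow_natCast lam k, ← Real.rpow_mul hlam0.le]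
        congr 1
        ring
      calc Real.sqrt (z.2 - ζ.2) ≤ Real.sqrt (lam ^ k * u) := Real.sqrt_le_sqrt h1
        _ = Real.sqrt (lam ^ k) * Real.sqrt u := Real.sqrt_mul hlamk.le u
        _ = lam ^ ((k : ℝ) / 2) * Real.sqrt u := by rw [h3]
        _ ≤ lam ^ ((k : ℝ) / 2) * 2 ^ m := by
            exact mul_le_mul_of_nonneg_left hsqle (Real.rpow_pos_of_pos hlam0 _).le
        _ = 2 ^ m * lam ^ ((k : ℝ) / 2) := mul_comm _ _
    have hvol : volume (dBall d z.1 (Real.sqrt (z.2 - ζ.2))) ≤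
        ENNReal.ofReal (cd * u ^ (Q / 2)) * V := by
      have hsub : dBall d z.1 (Real.sqrt (z.2 - ζ.2)) ⊆
          dBall d z₀.1 (2 ^ m * lam ^ ((k : ℝ) / 2)) := by
        intro y hy
        exact lt_of_lt_of_le hy hsqrtle
      calc volume (dBall d z.1 (Real.sqrt (z.2 - ζ.2)))
          ≤ volume (dBall d z₀.1 (2 ^ m * lam ^ ((k : ℝ) / 2))) := measure_mono hsub
        _ ≤ ENNReal.ofReal cd ^ m * V :=
            doubling_iter hdb z₀.1 (Real.rpow_pos_of_pos hlam0 _) m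
        _ = ENNReal.ofReal (cd ^ m) * V := by rw [ENNReal.ofReal_pow hcd0.le]
        _ ≤ ENNReal.ofReal (cd * u ^ (Q / 2)) * V :=
            mul_le_mul_left (ENNReal.ofReal_le_ofReal hcdm) V
    -- put it together
    rw [gaussK, if_pos hζlt]
    have hstep : (M * V)⁻¹ =
        ENNReal.ofReal (Real.exp (-a)) * (ENNReal.ofReal (cd * u ^ (Q / 2)) * V)⁻¹ := by
      rw [hMfact, mul_assoc, ENNReal.mul_inv (Or.inl (ENNReal.ofReal_pos.mpr (Real.exp_pos a)).ne')
          (Or.inl ENNReal.ofReal_ne_top),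
        Real.exp_neg, ENNReal.ofReal_inv_of_pos (Real.exp_pos a)]
    rw [hstep]
    calc ENNReal.ofReal (Real.exp (-a)) * (ENNReal.ofReal (cd * u ^ (Q / 2)) * V)⁻¹
        ≤ ENNReal.ofReal (Real.exp (-a * d z₀.1 ζ.1 ^ 2 / (z.2 - ζ.2))) *
            (volume (dBall d z.1 (Real.sqrt (z.2 - ζ.2))))⁻¹ :=
          mul_le_mul' (ENNReal.ofReal_le_ofReal hexpfac) (ENNReal.inv_le_inv.mpr hvol)
      _ = (volume (dBall d z.1 (Real.sqrt (z.2 - ζ.2))))⁻¹ *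
            ENNReal.ofReal (Real.exp (-a * d z.1 ζ.1 ^ 2 / (z.2 - ζ.2))) := by
          rw [mul_comm]
  -- capacity estimate
  apply iSup₂_le
  intro μ hμ
  obtain ⟨-, -, hnull, hpot⟩ := hμ
  have hae : ∀ᵐ ζ ∂μ, (M * V)⁻¹ ≤ gaussK d a z ζ := by
    rw [ae_iff]
    refine measure_mono_null ?_ hnull
    intro ζ hζ hF
    exact hζ (hker ζ hF)
  have hle : (M * V)⁻¹ * μ F ≤ 1 := by
    calc (M * V)⁻¹ * μ F ≤ (M * V)⁻¹ * μ univ :=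
          mul_le_mul_right (measure_mono (subset_univ F)) _
      _ = ∫⁻ _, (M * V)⁻¹ ∂μ := (lintegral_const _).symm
      _ ≤ ∫⁻ ζ, gaussK d a z ζ ∂μ := lintegral_mono_ae hae
      _ ≤ 1 := hpot z hz
  have hMV0 : M * V ≠ 0 := mul_ne_zero hMpos hVpos
  have hMVtop : M * V ≠ ∞ := ENNReal.mul_ne_top hMtop hVtop
  calc μ F = M * V * ((M * V)⁻¹ * μ F) := by
        rw [← mul_assoc, ENNReal.mul_inv_cancel hMV0 hMVtop, one_mul]
    _ ≤ M * V * 1 := mul_le_mul_right hle _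
    _ = M * V := mul_one _
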